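/- Let V be a finite set, let E_1, …, E_T be directed acyclic graphs (DAGs) on V, and let S_0 ⊆ V. For k = 1, …, T define S_k := Sync(E_k, S_{k−1}). If every root node r of E_1 with the property that (r,1) reaches (r',T) in the fused graph 𝒢 for some root node r' of E_T belongs to S_0, then S_T = V. -/

import Mathlib

/-- A node `i` is a root node of the digraph `E` (where `E j i` denotes an edge
from `j` to `i`) if it has no in-neighbors. -/
def isRoot {V : Type*} (E : V → V → Prop) (i : V) : Prop := ∀ j, ¬ E j i

/-- A digraph is a DAG if its transitive closure is irreflexive,
i.e. there is no directed cycle. -/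
def IsDAG {V : Type*} (E : V → V → Prop) : Prop := ∀ i, ¬ Relation.TransGen E i i

/-- Given a DAG `E` on `V` and a set `S` of nodes synchronized at the start of a
snapshot, `sync E S` is the set of nodes synchronized at the end of the snapshot:
those nodes `i` such that every root node of `E` reaching `i` belongs to `S`. -/
def sync {V : Type*} (E : V → V → Prop) (S : Set V) : Set V :=
  { i | ∀ r, isRoot E r → Relation.ReflTransGen E r i → r ∈ S }

/-- The fused graph of the snapshots `E 0, …, E (T-1)` (snapshot `k : Fin T`
represents the (k+1)-st snapshot).  It has an edge from `(j,k)` to `(i,k)` for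
every edge `(j,i)` of `E k`, and an edge from `(r, k-1)` to `(r, k)` for every
root node `r` of `E k` with `k ≥ 1`. -/
def fused {V : Type*} {T : ℕ} (E : Fin T → V → V → Prop) :
    (V × Fin T) → (V × Fin T) → Prop :=
  fun p q =>
    (p.2 = q.2 ∧ E q.2 p.1 q.1) ∨
    (p.1 = q.1 ∧ (p.2 : ℕ) + 1 = (q.2 : ℕ) ∧ isRoot (E q.2) q.1)

/-- If `E 0, …, E (T-1)` are DAGs on a finite set `V`,
`S 0 = S₀` and `S (k+1) = sync (E k) (S k)`, and every root node `r` of the first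
snapshot which reaches, in the fused graph, some root node `r'` of the last
snapshot belongs to `S 0`, then `S T = V`. -/
theorem fusedGraph_path_condition_implies_full_sync
    {V : Type*} [Fintype V] {T : ℕ} (hT : 0 < T)
    (E : Fin T → V → V → Prop) (hE : ∀ k, IsDAG (E k))
    (S : ℕ → Set V)
    (hstep : ∀ k : Fin T, S ((k : ℕ) + 1) = sync (E k) (S (k : ℕ)))
    (hpin : ∀ r : V, isRoot (E ⟨0, hT⟩) r →
      (∃ r' : V, isRoot (E ⟨T - 1, Nat.sub_lt hT one_pos⟩) r' ∧
        Relation.ReflTransGen (fused E) (r, ⟨0, hT⟩) (r', ⟨T - 1, Nat.sub_lt hT one_pos⟩)) →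
      r ∈ S 0) :
    S T = Set.univ := by
  -- paths within one snapshot lift to the fused graph
  have within : ∀ (k : Fin T) (a b : V), Relation.ReflTransGen (E k) a b →
      Relation.ReflTransGen (fused E) (a, k) (b, k) := by
    intro k a b h
    exact Relation.ReflTransGen.lift (p := fused E) (fun x => (x, k))
      (fun a b h => Or.inl ⟨rfl, h⟩) a b h
  -- main claim: a root of snapshot k reaching a final root lies in S k
  have D : ∀ k (hk : k < T) (r : V), isRoot (E ⟨k, hk⟩) r →
      (∃ r' : V, isRoot (E ⟨T - 1, Nat.sub_lt hT one_pos⟩) r' ∧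
        Relation.ReflTransGen (fused E) (r, ⟨k, hk⟩)
          (r', ⟨T - 1, Nat.sub_lt hT one_pos⟩)) → r ∈ S k := by
    intro k
    induction k with
    | zero => intro hk r hr h; exact hpin r hr h
    | succ k ih =>
      intro hk r hr h
      obtain ⟨r', hr', hpath⟩ := h
      have hk' : k < T := Nat.lt_of_succ_lt hk
      have := hstep ⟨k, hk'⟩
      rw [show ((⟨k, hk'⟩ : Fin T) : ℕ) = k from rfl] at this
      rw [this]
      intro r₀ h0 hreach
      apply ih hk' r₀ h0
      refine ⟨r', hr', ?_⟩
      refine Relation.ReflTransGen.trans (within _ _ _ hreach) ?_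
      refine Relation.ReflTransGen.trans (Relation.ReflTransGen.single ?_) hpath
      exact Or.inr ⟨rfl, rfl, hr⟩
  -- conclude
  ext v
  simp only [Set.mem_univ, iff_true]
  have hlt : T - 1 < T := Nat.sub_lt hT one_pos
  have hTeq : T - 1 + 1 = T := Nat.succ_pred_eq_of_pos hT
  have := hstep ⟨T - 1, hlt⟩
  rw [show ((⟨T - 1, hlt⟩ : Fin T) : ℕ) = T - 1 from rfl, hTeq] at this
  rw [this]
  intro r hroot _
  exact D (T - 1) hlt r hroot ⟨r, hroot, Relation.ReflTransGen.refl⟩
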